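/- A sequence $f(0), f(1), \ldots$ of complex numbers is $p$-recursive (satisfies a nontrivial linear recurrence with polynomial coefficients $P_k(n+k)f(n+k) + \cdots + P_0(n)f(n) = 0$ for all $n$, with $P_k \neq 0$) if and only if its ordinary generating function $u(x) = \sum_{n\ge 0} f(n)x^n$ is $d$-finite (satisfies a nontrivial linear ODE with polynomial coefficients). -/

import Mathlib

open PowerSeries Polynomial Finset

lemma coeff_derivativeFun' (f : PowerSeries ℂ) (n : ℕ) :
    PowerSeries.coeff n (PowerSeries.derivativeFun f) = PowerSeries.coeff (n + 1) f * (n + 1) :=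
  PowerSeries.coeff_derivative f n

lemma derivativeFun_coe' (f : Polynomial ℂ) :
    PowerSeries.derivativeFun (f : PowerSeries ℂ) = (Polynomial.derivative f : PowerSeries ℂ) :=
  PowerSeries.derivative_coe f

noncomputable def ffPoly (r : ℕ) : Polynomial ℂ := ∏ t ∈ Finset.range r, (Polynomial.X - Polynomial.C (t:ℂ))

lemma ffPoly_monic (r : ℕ) : (ffPoly r).Monic :=
  monic_prod_of_monic _ _ fun t _ => monic_X_sub_C _

lemma ffPoly_natDegree (r : ℕ) : (ffPoly r).natDegree = r := by
  rw [ffPoly, natDegree_prod_of_monic]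
  · rw [Finset.sum_congr rfl fun x _ => natDegree_X_sub_C ((x:ℕ):ℂ)]
    simp
  · exact fun t _ => monic_X_sub_C _

lemma ffPoly_eval_nat (r n : ℕ) :
    (ffPoly r).eval ((n:ℕ):ℂ) =
      if r ≤ n then ∏ t ∈ Finset.range r, (((n-r:ℕ):ℂ)+1+t) else 0 := by
  rw [ffPoly, eval_prod]
  split_ifs with h
  · rw [← Finset.prod_range_reflect]
    apply Finset.prod_congr rfl
    intro t ht
    simp only [Finset.mem_range] at ht
    rw [eval_sub, eval_X, eval_C]
    have h1 : (r - 1 - t : ℕ) ≤ n := by omega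
    have h2 : (n - (r-1-t) : ℕ) = (n - r) + 1 + t := by omega
    rw [← Nat.cast_sub h1, h2]
    push_cast
    ring
  · apply Finset.prod_eq_zero (Finset.mem_range.mpr (show n < r by omega))
    simp

lemma coeff_iter_deriv (f : ℕ → ℂ) (i : ℕ) : ∀ n : ℕ,
    PowerSeries.coeff n ((PowerSeries.derivativeFun)^[i] (PowerSeries.mk f)) =
      (∏ t ∈ Finset.range i, ((n:ℂ)+1+t)) * f (n+i) := by
  induction i with
  | zero => simp
  | succ i ih =>
    intro n
    rw [Function.iterate_succ_apply', coeff_derivativeFun', ih (n+1),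
      Finset.prod_range_succ']
    rw [Finset.prod_congr rfl (fun (x : ℕ) _ => show (n:ℂ)+1+((x+1 : ℕ):ℂ) = ((n+1:ℕ):ℂ)+1+(x:ℂ) by push_cast; ring)]
    rw [show n+1+i = n+(i+1) by omega]
    push_cast
    ring

lemma coeff_X_pow_mul_iter (f : ℕ → ℂ) (J r n : ℕ) :
    PowerSeries.coeff n (PowerSeries.X^J * (PowerSeries.derivativeFun)^[r] (PowerSeries.mk f)) =
      if J ≤ n then (∏ t ∈ Finset.range r, (((n-J:ℕ):ℂ)+1+t)) * f (n-J+r) else 0 := by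
  rw [PowerSeries.coeff_X_pow_mul']
  split_ifs with h
  · rw [coeff_iter_deriv]
  · rfl

lemma keyK (f : ℕ → ℂ) (a : ℂ) (i r m k : ℕ) (h : i ≤ k) :
    PowerSeries.coeff (k+m) ((PowerSeries.C a * PowerSeries.X^(k-i+r)) *
      (PowerSeries.derivativeFun)^[r] (PowerSeries.mk f)) =
      a * ((ffPoly r).eval ((m+i:ℕ):ℂ) * f (m+i)) := by
  rw [mul_assoc, PowerSeries.coeff_C_mul, coeff_X_pow_mul_iter, ffPoly_eval_nat]
  split_ifs with h1 h2 h2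
  · rw [show k+m-(k-i+r) = m+i-r by omega, show m+i-r+r = m+i by omega]
  · omega
  · omega
  · rw [zero_mul, mul_zero]

lemma li_ff : ∀ (m : ℕ) (b : ℕ → ℂ),
    (∑ i ∈ Finset.range m, Polynomial.C (b i) * ffPoly i) = 0 → ∀ i < m, b i = 0 := by
  intro m
  induction m with
  | zero => intro b _ i hi; omega
  | succ m ih =>
    intro b h
    have hbm : b m = 0 := by
      have h2 := congrArg (fun p => Polynomial.coeff p m) h
      simp only [Polynomial.finset_sum_coeff, Polynomial.coeff_zero] at h2
      rw [Finset.sum_range_succ] at h2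
      rw [Finset.sum_eq_zero (fun i hi => by
        rw [Polynomial.coeff_C_mul,
          Polynomial.coeff_eq_zero_of_natDegree_lt (by rw [ffPoly_natDegree]; exact Finset.mem_range.mp hi),
          mul_zero])] at h2
      rw [Polynomial.coeff_C_mul] at h2
      have : (ffPoly m).coeff m = 1 := by
        have := (ffPoly_monic m).coeff_natDegree
        rwa [ffPoly_natDegree] at this
      rw [this, mul_one, zero_add] at h2
      exact h2
    have h3 : (∑ i ∈ Finset.range m, Polynomial.C (b i) * ffPoly i) = 0 := by
      rw [Finset.sum_range_succ, hbm] at h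
      simpa using h
    intro i hi
    rcases Nat.lt_succ_iff_lt_or_eq.mp hi with h4 | h4
    · exact ih b h3 i h4
    · rw [h4]; exact hbm

lemma ff_expand_aux : ∀ (n : ℕ) (Q : Polynomial ℂ), Q.natDegree ≤ n →
    ∃ q : ℕ → ℂ, (∀ r, Q.natDegree < r → q r = 0) ∧ q Q.natDegree = Q.leadingCoeff ∧
      Q = ∑ r ∈ Finset.range (Q.natDegree+1), Polynomial.C (q r) * ffPoly r := by
  intro n
  induction n with
  | zero =>
    intro Q hQ
    have hd : Q.natDegree = 0 := Nat.le_zero.mp hQ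
    refine ⟨fun r => if r = 0 then Q.coeff 0 else 0, ?_, ?_, ?_⟩
    · intro r hr
      rw [hd] at hr
      show (if r = 0 then Q.coeff 0 else 0) = 0
      rw [if_neg (by omega)]
    · show (if Q.natDegree = 0 then Q.coeff 0 else 0) = Q.leadingCoeff
      rw [if_pos hd, Polynomial.leadingCoeff, hd]
    · rw [hd]
      show Q = ∑ r ∈ Finset.range 1, Polynomial.C (if r = 0 then Q.coeff 0 else 0) * ffPoly r
      rw [Finset.sum_range_one, if_pos rfl]
      have : ffPoly 0 = 1 := by simp [ffPoly]
      rw [this, mul_one]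
      exact Polynomial.eq_C_of_natDegree_le_zero hQ
  | succ n ih =>
    intro Q hQ
    by_cases hc : Q.natDegree ≤ n
    · exact ih Q hc
    · have hd : Q.natDegree = n + 1 := by omega
      have hff1 : (ffPoly (n+1)).coeff (n+1) = 1 := by
        have := (ffPoly_monic (n+1)).coeff_natDegree
        rwa [ffPoly_natDegree] at this
      have hdeg' : (Q - Polynomial.C Q.leadingCoeff * ffPoly (n+1)).natDegree ≤ n := by
        apply Polynomial.natDegree_le_iff_coeff_eq_zero.mpr
        intro N hN
        rw [Polynomial.coeff_sub, Polynomial.coeff_C_mul]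
        rcases Nat.lt_or_ge N (n+2) with h5 | h5
        · have hN1 : N = n + 1 := by omega
          rw [hN1, hff1, mul_one, ← hd, Polynomial.coeff_natDegree, sub_self]
        · rw [Polynomial.coeff_eq_zero_of_natDegree_lt (by omega),
            Polynomial.coeff_eq_zero_of_natDegree_lt (by rw [ffPoly_natDegree]; omega)]
          simp
      obtain ⟨q', hq'0, _, hq'sum⟩ := ih (Q - Polynomial.C Q.leadingCoeff * ffPoly (n+1)) hdeg'
      set Q' := Q - Polynomial.C Q.leadingCoeff * ffPoly (n+1) with hQ'
      refine ⟨fun r => if r = n+1 then Q.leadingCoeff else q' r, ?_, ?_, ?_⟩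
      · intro r hr
        rw [hd] at hr
        show (if r = n+1 then Q.leadingCoeff else q' r) = 0
        rw [if_neg (by omega)]
        exact hq'0 r (by omega)
      · show (if Q.natDegree = n+1 then Q.leadingCoeff else q' Q.natDegree) = Q.leadingCoeff
        rw [if_pos hd]
      · have hsum : ∑ r ∈ Finset.range (n+1),
            Polynomial.C (if r = n+1 then Q.leadingCoeff else q' r) * ffPoly r = Q' := by
          rw [Finset.sum_congr rfl (fun r hr => by
            rw [if_neg (by simp only [Finset.mem_range] at hr; omega)])]
          rw [hq'sum]
          symm
          apply Finset.sum_subset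
          · intro x hx
            simp only [Finset.mem_range] at *
            omega
          · intro x _ hx2
            simp only [Finset.mem_range] at hx2
            rw [hq'0 x (by omega)]
            simp
        rw [hd]
        show Q = ∑ r ∈ Finset.range (n+1+1),
          Polynomial.C (if r = n+1 then Q.leadingCoeff else q' r) * ffPoly r
        rw [Finset.sum_range_succ, if_pos rfl, hsum, hQ']
        ring

lemma deriv_kill : ∀ (k : ℕ) (V : PowerSeries ℂ),
    (∀ m, k ≤ m → PowerSeries.coeff m V = 0) → (PowerSeries.derivativeFun)^[k] V = 0 := by
  intro k
  induction k with
  | zero => intro V h; ext m; simpa using h m (Nat.zero_le m)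
  | succ k ih =>
    intro V h
    rw [Function.iterate_succ_apply]
    apply ih
    intro m hm
    rw [coeff_derivativeFun', h (m+1) (by omega), zero_mul]

lemma coeff_poly_mul (P : Polynomial ℂ) (w : PowerSeries ℂ) (n : ℕ) :
    PowerSeries.coeff n ((P : PowerSeries ℂ) * w) =
      ∑ j ∈ Finset.range (n+1), P.coeff j * PowerSeries.coeff (n-j) w := by
  rw [PowerSeries.coeff_mul, Finset.Nat.sum_antidiagonal_eq_sum_range_succ_mk]
  simp [Polynomial.coeff_coe]

lemma ff_expand (Q : Polynomial ℂ) :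
    ∃ q : ℕ → ℂ, (∀ r, Q.natDegree < r → q r = 0) ∧ q Q.natDegree = Q.leadingCoeff ∧
      ∀ N, Q.natDegree ≤ N → Q = ∑ r ∈ Finset.range (N+1), Polynomial.C (q r) * ffPoly r := by
  obtain ⟨q, h0, h1, h2⟩ := ff_expand_aux Q.natDegree Q le_rfl
  refine ⟨q, h0, h1, fun N hN => ?_⟩
  rw [h2]
  apply Finset.sum_subset
  · intro x hx; simp only [Finset.mem_range] at *; omega
  · intro x _ hx2
    simp only [Finset.mem_range] at hx2
    rw [h0 x (by omega)]
    simp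

lemma derivFun_sum {ι : Type*} (s : Finset ι) (F : ι → PowerSeries ℂ) :
    PowerSeries.derivativeFun (∑ i ∈ s, F i) = ∑ i ∈ s, (F i).derivativeFun := by
  ext n
  rw [coeff_derivativeFun', map_sum, map_sum, Finset.sum_mul]
  exact Finset.sum_congr rfl fun i _ => (coeff_derivativeFun' _ _).symm

lemma step_induction (u V : PowerSeries ℂ) (R : ℕ) (g0 : ℕ → Polynomial ℂ)
    (hbase : ∑ i ∈ Finset.range (R+1), (g0 i : PowerSeries ℂ) *
      (PowerSeries.derivativeFun)^[i] u = V) :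
    ∀ j, ∃ p : ℕ → Polynomial ℂ, p (R+j) = g0 R ∧ (∀ i, R+j < i → p i = 0) ∧
      ∑ i ∈ Finset.range (R+j+1), (p i : PowerSeries ℂ) *
        (PowerSeries.derivativeFun)^[i] u = (PowerSeries.derivativeFun)^[j] V := by
  intro j
  induction j with
  | zero =>
    refine ⟨fun i => if i ≤ R then g0 i else 0, by simp, ?_, ?_⟩
    · intro i hi
      show (if i ≤ R then g0 i else 0) = 0
      rw [if_neg (by omega)]
    · have hs : ∀ i ∈ Finset.range (R+0+1),
          ((if i ≤ R then g0 i else 0 : Polynomial ℂ) : PowerSeries ℂ) *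
            (PowerSeries.derivativeFun)^[i] u
          = (g0 i : PowerSeries ℂ) * (PowerSeries.derivativeFun)^[i] u := by
        intro i hi
        simp only [Finset.mem_range] at hi
        rw [if_pos (show i ≤ R by omega)]
      exact (Finset.sum_congr rfl hs).trans hbase
  | succ j ihj =>
    obtain ⟨p, h1, h2, h3⟩ := ihj
    refine ⟨fun i => Polynomial.derivative (p i) + if i = 0 then 0 else p (i-1), ?_, ?_, ?_⟩
    · show Polynomial.derivative (p (R+(j+1))) + _ = g0 R
      rw [h2 (R+(j+1)) (by omega)]
      simp only [map_zero, zero_add, if_neg (by omega : ¬ R+(j+1) = 0)]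
      rw [show R+(j+1)-1 = R+j by omega, h1]
    · intro i hi
      show Polynomial.derivative (p i) + _ = 0
      rw [h2 i (by omega), if_neg (by omega : ¬ i = 0), h2 (i-1) (by omega)]
      simp
    · rw [Function.iterate_succ_apply', ← h3, derivFun_sum]
      have expand : ∀ i : ℕ, PowerSeries.derivativeFun ((p i : PowerSeries ℂ) *
          (PowerSeries.derivativeFun)^[i] u) =
          (Polynomial.derivative (p i) : PowerSeries ℂ) * (PowerSeries.derivativeFun)^[i] u
            + (p i : PowerSeries ℂ) * (PowerSeries.derivativeFun)^[i+1] u := by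
        intro i
        rw [PowerSeries.derivativeFun_mul, smul_eq_mul, smul_eq_mul,
          derivativeFun_coe', Function.iterate_succ_apply']
        ring
      rw [Finset.sum_congr rfl fun i _ => expand i, Finset.sum_add_distrib]
      have lhs_split : ∑ i ∈ Finset.range (R+(j+1)+1),
          ((Polynomial.derivative (p i) + if i = 0 then 0 else p (i-1) : Polynomial ℂ) : PowerSeries ℂ) *
            (PowerSeries.derivativeFun)^[i] u =
          (∑ i ∈ Finset.range (R+(j+1)+1), (Polynomial.derivative (p i) : PowerSeries ℂ) *
            (PowerSeries.derivativeFun)^[i] u)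
          + ∑ i ∈ Finset.range (R+(j+1)+1), ((if i = 0 then 0 else p (i-1) : Polynomial ℂ) : PowerSeries ℂ) *
            (PowerSeries.derivativeFun)^[i] u := by
        rw [← Finset.sum_add_distrib]
        refine Finset.sum_congr rfl fun i _ => ?_
        rw [Polynomial.coe_add, add_mul]
      rw [lhs_split]
      congr 1
      · rw [Finset.sum_range_succ, h2 (R+(j+1)) (by omega)]
        simp
        rfl
      · rw [Finset.sum_range_succ']
        simp only [if_neg, if_pos rfl]
        rw [Finset.sum_congr rfl (fun i _ => by
          rw [if_neg (by omega : ¬ i+1 = 0), show i+1-1 = i from rfl])]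
        simp
        rfl

lemma coe_g_sum (k : ℕ) (c : ℕ → ℂ) (e : ℕ → ℕ) :
    ((∑ i ∈ Finset.range (k+1), Polynomial.C (c i) * Polynomial.X^(e i) : Polynomial ℂ) :
      PowerSeries ℂ)
    = ∑ i ∈ Finset.range (k+1), PowerSeries.C (c i) * PowerSeries.X^(e i) := by
  rw [← Polynomial.coeToPowerSeries.ringHom_apply, map_sum]
  exact Finset.sum_congr rfl fun i _ => by
    rw [Polynomial.coeToPowerSeries.ringHom_apply, Polynomial.coe_mul, Polynomial.coe_C,
      Polynomial.coe_pow, Polynomial.coe_X]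

lemma forward_dir (f : ℕ → ℂ) (k : ℕ) (P : ℕ → Polynomial ℂ) (hPk : P k ≠ 0)
    (hrec : ∀ n : ℕ, ∑ i ∈ Finset.range (k + 1),
      (P i).eval ((n + i : ℕ) : ℂ) * f (n + i) = 0) :
    ∃ (d : ℕ) (p : ℕ → Polynomial ℂ), p d ≠ 0 ∧
      ∑ i ∈ Finset.range (d + 1),
        (p i : PowerSeries ℂ) * (PowerSeries.derivativeFun)^[i] (PowerSeries.mk f) = 0 := by
  classical
  set u := PowerSeries.mk f with hu
  set R := (Finset.range (k+1)).sup fun i => (P i).natDegree with hR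
  choose q hq0 hqlead hqsum using fun i => ff_expand (P i)
  set g : ℕ → Polynomial ℂ :=
    fun r => ∑ i ∈ Finset.range (k+1), Polynomial.C (q i r) * Polynomial.X^(k-i+r) with hg
  set V : PowerSeries ℂ :=
    ∑ r ∈ Finset.range (R+1), (g r : PowerSeries ℂ) * (PowerSeries.derivativeFun)^[r] u with hV
  have hdegR : ∀ i, i ≤ k → (P i).natDegree ≤ R := by
    intro i hi
    show (P i).natDegree ≤ (Finset.range (k+1)).sup fun j => (P j).natDegree
    exact Finset.le_sup (f := fun j => (P j).natDegree) (Finset.mem_range.mpr (Nat.lt_succ_of_le hi))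
  have hVc : ∀ m : ℕ, PowerSeries.coeff (k+m) V =
      ∑ i ∈ Finset.range (k+1), (P i).eval ((m + i : ℕ) : ℂ) * f (m + i) := by
    intro m
    rw [hV, map_sum]
    have hterm : ∀ r ∈ Finset.range (R+1),
        PowerSeries.coeff (k+m) ((g r : PowerSeries ℂ) * (PowerSeries.derivativeFun)^[r] u) =
        ∑ i ∈ Finset.range (k+1), q i r * ((ffPoly r).eval ((m+i:ℕ):ℂ) * f (m+i)) := by
      intro r _
      rw [hg]
      rw [coe_g_sum k (fun i => q i r) (fun i => k-i+r), Finset.sum_mul, map_sum]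
      refine Finset.sum_congr rfl fun i hi => ?_
      simp only [Finset.mem_range] at hi
      exact keyK f (q i r) i r m k (by omega)
    rw [Finset.sum_congr rfl hterm, Finset.sum_comm]
    refine Finset.sum_congr rfl fun i hi => ?_
    simp only [Finset.mem_range] at hi
    have hPi := hqsum i R (hdegR i (by omega))
    calc ∑ x ∈ Finset.range (R+1), q i x * (Polynomial.eval ((m+i:ℕ):ℂ) (ffPoly x) * f (m+i))
        = (∑ x ∈ Finset.range (R+1), q i x * Polynomial.eval ((m+i:ℕ):ℂ) (ffPoly x)) * f (m+i) := by
          rw [Finset.sum_mul]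
          exact Finset.sum_congr rfl fun x _ => by ring
      _ = Polynomial.eval ((m+i:ℕ):ℂ) (P i) * f (m+i) := by
          congr 1
          conv_rhs => rw [hPi]
          rw [Polynomial.eval_finset_sum]
          exact Finset.sum_congr rfl fun x _ => by
            rw [Polynomial.eval_mul, Polynomial.eval_C]
  have hV0 : ∀ m, k ≤ m → PowerSeries.coeff m V = 0 := by
    intro m hm
    rw [show m = k + (m-k) by omega, hVc (m-k), hrec (m-k)]
  obtain ⟨p, hp1, _, hp3⟩ := step_induction u V R g rfl k
  have hDkV : (PowerSeries.derivativeFun)^[k] V = 0 := deriv_kill k V hV0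
  -- find i0 with P i0 ≠ 0 and natDegree = R
  have hi0 : ∃ i0, i0 ≤ k ∧ P i0 ≠ 0 ∧ (P i0).natDegree = R := by
    obtain ⟨i1, hi1mem, hi1⟩ := Finset.exists_mem_eq_sup (Finset.range (k+1))
      ⟨0, Finset.mem_range.mpr (by omega)⟩ fun i => (P i).natDegree
    simp only [Finset.mem_range] at hi1mem
    by_cases hz : P i1 = 0
    · have hR0 : R = 0 := by rw [hR, hi1, hz]; simp
      exact ⟨k, le_rfl, hPk, by have := hdegR k le_rfl; omega⟩
    · exact ⟨i1, by omega, hz, hi1.symm⟩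
  obtain ⟨i0, hi0k, hi0ne, hi0deg⟩ := hi0
  have hgRcoeff : (g R).coeff (k - i0 + R) = q i0 R := by
    rw [hg]
    show (∑ i ∈ Finset.range (k+1), Polynomial.C (q i R) * Polynomial.X^(k-i+R)).coeff (k-i0+R)
      = q i0 R
    rw [Polynomial.finset_sum_coeff]
    rw [Finset.sum_eq_single i0]
    · rw [Polynomial.coeff_C_mul, Polynomial.coeff_X_pow, if_pos rfl, mul_one]
    · intro i hi hne
      simp only [Finset.mem_range] at hi
      rw [Polynomial.coeff_C_mul, Polynomial.coeff_X_pow, if_neg (by omega), mul_zero]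
    · intro habs
      exact absurd (Finset.mem_range.mpr (by omega)) habs
  have hgR : g R ≠ 0 := by
    intro h0
    rw [h0, Polynomial.coeff_zero] at hgRcoeff
    have : q i0 R = (P i0).leadingCoeff := by rw [← hi0deg]; exact hqlead i0
    rw [this] at hgRcoeff
    exact hi0ne (Polynomial.leadingCoeff_eq_zero.mp hgRcoeff.symm)
  refine ⟨R + k, p, by rw [hp1]; exact hgR, ?_⟩
  rw [hp3, hDkV]

lemma backward_dir (f : ℕ → ℂ) (d : ℕ) (p : ℕ → Polynomial ℂ) (hpd : p d ≠ 0)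
    (hode : ∑ i ∈ Finset.range (d + 1),
      (p i : PowerSeries ℂ) * (PowerSeries.derivativeFun)^[i] (PowerSeries.mk f) = 0) :
    ∃ (k : ℕ) (P : ℕ → Polynomial ℂ), P k ≠ 0 ∧
      ∀ n : ℕ, ∑ i ∈ Finset.range (k + 1),
        (P i).eval ((n + i : ℕ) : ℂ) * f (n + i) = 0 := by
  classical
  set N := ((Finset.range (d+1)).sup fun i => (p i).natDegree) + 1 with hN
  have hcz : ∀ i, i ≤ d → ∀ j, N ≤ j → (p i).coeff j = 0 := by
    intro i hi j hj
    apply Polynomial.coeff_eq_zero_of_natDegree_lt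
    have : (p i).natDegree ≤ (Finset.range (d+1)).sup fun i => (p i).natDegree :=
      Finset.le_sup (f := fun i => (p i).natDegree) (Finset.mem_range.mpr (by omega))
    omega
  have hcoeffid : ∀ m : ℕ, ∑ i ∈ Finset.range (d+1), ∑ j ∈ Finset.range N,
      (p i).coeff j * ((∏ t ∈ Finset.range i, (((m+N-j:ℕ):ℂ)+1+t)) * f (m+N-j+i)) = 0 := by
    intro m
    have h0 : PowerSeries.coeff (m+N) (∑ i ∈ Finset.range (d + 1),
        (p i : PowerSeries ℂ) * (PowerSeries.derivativeFun)^[i] (PowerSeries.mk f)) = 0 := by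
      rw [hode, map_zero]
    rw [map_sum] at h0
    rw [← h0]
    refine Finset.sum_congr rfl fun i hi => ?_
    simp only [Finset.mem_range] at hi
    have e1 := coeff_poly_mul (p i) ((PowerSeries.derivativeFun)^[i] (PowerSeries.mk f)) (m+N)
    have e2 : ∑ j ∈ Finset.range (m+N+1), (p i).coeff j *
        PowerSeries.coeff (m+N-j) ((PowerSeries.derivativeFun)^[i] (PowerSeries.mk f)) =
        ∑ j ∈ Finset.range N, (p i).coeff j *
        PowerSeries.coeff (m+N-j) ((PowerSeries.derivativeFun)^[i] (PowerSeries.mk f)) := by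
      symm
      apply Finset.sum_subset
      · intro x hx
        simp only [Finset.mem_range] at *
        omega
      · intro x _ hx2
        simp only [Finset.mem_range] at hx2
        rw [hcz i (by omega) x (by omega), zero_mul]
    have e3 : ∑ j ∈ Finset.range N, (p i).coeff j *
        PowerSeries.coeff (m+N-j) ((PowerSeries.derivativeFun)^[i] (PowerSeries.mk f)) =
        ∑ j ∈ Finset.range N, (p i).coeff j *
          ((∏ t ∈ Finset.range i, (((m+N-j:ℕ):ℂ)+1+t)) * f (m+N-j+i)) :=
      Finset.sum_congr rfl fun j _ => by rw [coeff_iter_deriv]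
    exact ((e1.trans e2).trans e3).symm
  set Q : ℕ → Polynomial ℂ := fun s => ∑ i ∈ Finset.range (d+1),
    if i < s ∧ s ≤ N+i then Polynomial.C ((p i).coeff (N+i-s)) * ffPoly i else 0 with hQ
  have hrec : ∀ n : ℕ, ∑ s ∈ Finset.range (N+d+1),
      (Q s).eval ((n+s:ℕ):ℂ) * f (n+s) = 0 := by
    intro n
    rw [← hcoeffid n]
    have hstep : ∀ s ∈ Finset.range (N+d+1), (Q s).eval ((n+s:ℕ):ℂ) * f (n+s) =
        ∑ i ∈ Finset.range (d+1), (if i < s ∧ s ≤ N+i then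
          (p i).coeff (N+i-s) * ((∏ t ∈ Finset.range i, (((n+s-i:ℕ):ℂ)+1+t)) * f (n+s)) else 0) := by
      intro s _
      rw [hQ]
      show Polynomial.eval _ (∑ i ∈ Finset.range (d+1), if i < s ∧ s ≤ N+i then
        Polynomial.C ((p i).coeff (N+i-s)) * ffPoly i else 0) * f (n+s) = _
      rw [Polynomial.eval_finset_sum, Finset.sum_mul]
      refine Finset.sum_congr rfl fun i hi => ?_
      simp only [Finset.mem_range] at hi
      split_ifs with hcond
      · rw [Polynomial.eval_mul, Polynomial.eval_C, ffPoly_eval_nat i (n+s),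
          if_pos (by omega : i ≤ n+s)]
        ring
      · simp
    rw [Finset.sum_congr rfl hstep, Finset.sum_comm]
    refine Finset.sum_congr rfl fun i hi => ?_
    simp only [Finset.mem_range] at hi
    rw [← Finset.sum_filter]
    have hfilter : (Finset.range (N+d+1)).filter (fun s => i < s ∧ s ≤ N+i) =
        Finset.Ioc i (N+i) := by
      ext s
      simp only [Finset.mem_filter, Finset.mem_range, Finset.mem_Ioc]
      omega
    rw [hfilter]
    refine Finset.sum_nbij' (fun s => N+i-s) (fun j => N+i-j) ?_ ?_ ?_ ?_ ?_
    · intro s hs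
      simp only [Finset.mem_Ioc] at hs
      simp only [Finset.mem_range]
      omega
    · intro j hj
      simp only [Finset.mem_range] at hj
      simp only [Finset.mem_Ioc]
      omega
    · intro s hs
      simp only [Finset.mem_Ioc] at hs
      show N+i-(N+i-s) = s
      omega
    · intro j hj
      simp only [Finset.mem_range] at hj
      show N+i-(N+i-j) = j
      omega
    · intro s hs
      simp only [Finset.mem_Ioc] at hs
      show (p i).coeff (N+i-s) * ((∏ t ∈ Finset.range i, (((n+s-i:ℕ):ℂ)+1+t)) * f (n+s)) =
        (p i).coeff (N+i-s) * ((∏ t ∈ Finset.range i, (((n+N-(N+i-s):ℕ):ℂ)+1+t)) * f (n+N-(N+i-s)+i))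
      rw [show n+N-(N+i-s)+i = n+s by omega, show n+N-(N+i-s) = n+s-i by omega]
  -- nonzero witness
  obtain ⟨j0, hj0⟩ : ∃ j0, (p d).coeff j0 ≠ 0 := by
    by_contra hall
    push_neg at hall
    exact hpd (Polynomial.ext fun n => by rw [hall n, Polynomial.coeff_zero])
  have hj0N : j0 < N := by
    by_contra hge
    exact hj0 (hcz d le_rfl j0 (by omega))
  have hQs0 : Q (N+d-j0) ≠ 0 := by
    intro h0
    have hrw : Q (N+d-j0) = ∑ i ∈ Finset.range (d+1),
        Polynomial.C (if i < N+d-j0 ∧ N+d-j0 ≤ N+i then (p i).coeff (N+i-(N+d-j0)) else 0) *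
          ffPoly i := by
      rw [hQ]
      show (∑ i ∈ Finset.range (d+1), if i < N+d-j0 ∧ N+d-j0 ≤ N+i then
        Polynomial.C ((p i).coeff (N+i-(N+d-j0))) * ffPoly i else 0) = _
      refine Finset.sum_congr rfl fun i _ => ?_
      split_ifs with hcond
      · rfl
      · rw [map_zero, zero_mul]
    have hbd := li_ff (d+1) _ (by rw [← hrw, h0]) d (by omega)
    rw [if_pos (by constructor <;> omega)] at hbd
    rw [show N+d-(N+d-j0) = j0 by omega] at hbd
    exact hj0 hbd
  set S := (Finset.range (N+d+1)).filter (fun s => Q s ≠ 0) with hS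
  have hSne : S.Nonempty := ⟨N+d-j0, Finset.mem_filter.mpr
    ⟨Finset.mem_range.mpr (by omega), hQs0⟩⟩
  set k := S.max' hSne with hk
  have hkmem := S.max'_mem hSne
  have hk1 : k < N+d+1 := Finset.mem_range.mp (Finset.mem_filter.mp hkmem).1
  have hk2 : Q k ≠ 0 := (Finset.mem_filter.mp hkmem).2
  refine ⟨k, Q, hk2, fun n => ?_⟩
  rw [← hrec n]
  apply Finset.sum_subset
  · intro x hx
    simp only [Finset.mem_range] at *
    omega
  · intro x hx hx2
    simp only [Finset.mem_range] at hx hx2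
    have hQx : Q x = 0 := by
      by_contra hne
      have : x ∈ S := Finset.mem_filter.mpr ⟨Finset.mem_range.mpr hx, hne⟩
      have := Finset.le_max' S x this
      omega
    rw [hQx, Polynomial.eval_zero, zero_mul]

/-- A sequence `f` is `p`-recursive iff its ordinary generating function
`∑ f(n) xⁿ` is `d`-finite. -/
theorem precursive_iff_dfinite (f : ℕ → ℂ) :
    (∃ (k : ℕ) (P : ℕ → Polynomial ℂ), P k ≠ 0 ∧
      ∀ n : ℕ, ∑ i ∈ Finset.range (k + 1),
        (P i).eval ((n + i : ℕ) : ℂ) * f (n + i) = 0) ↔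
    (∃ (d : ℕ) (p : ℕ → Polynomial ℂ), p d ≠ 0 ∧
      ∑ i ∈ Finset.range (d + 1),
        (p i : PowerSeries ℂ) * (PowerSeries.derivativeFun)^[i] (PowerSeries.mk f) = 0) := by
  constructor
  · rintro ⟨k, P, h1, h2⟩
    exact forward_dir f k P h1 h2
  · rintro ⟨d, p, h1, h2⟩
    exact backward_dir f d p h1 h2
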